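/- For probability measures α, β on ℝ with finite first moments and barycenters a = ∫y dα, b = ∫y dβ, the equality W(α,β) = |a − b| holds if and only if α and β are comparable in first-order stochastic dominance (i.e., α ≤_st β when a ≤ b), equivalently iff there exists a coupling γ ∈ Π(α,β) that is isotone in the sense that γ({(y,y') : y ≤ y'}) = 1 (assuming a ≤ b). -/

import Mathlib

open MeasureTheory

/-- The `L¹`-Wasserstein distance between two probability measures on `ℝ`. -/
noncomputable def W1 (α β : Measure ℝ) : ℝ :=
  sInf {r : ℝ | ∃ γ : Measure (ℝ × ℝ), IsProbabilityMeasure γ ∧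
    γ.map Prod.fst = α ∧ γ.map Prod.snd = β ∧ r = ∫ p, |p.1 - p.2| ∂γ}

/-- First-order stochastic dominance: `∫ f dα ≤ ∫ f dβ` for all bounded increasing `f`. -/
def StochDom (α β : Measure ℝ) : Prop :=
  ∀ f : ℝ → ℝ, Monotone f → (∃ C, ∀ x, |f x| ≤ C) → ∫ x, f x ∂α ≤ ∫ x, f x ∂β

open ProbabilityTheory Set Filter Topology

set_option linter.unusedSectionVars false

/-! ### Quantile functions -/

noncomputable def Quant (μ : Measure ℝ) (u : ℝ) : ℝ := sInf {x | u ≤ cdf μ x}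

section QuantLemmas
variable (μ : Measure ℝ) [IsProbabilityMeasure μ] {u : ℝ}

lemma quant_set_nonempty (hu : u < 1) : {x | u ≤ cdf μ x}.Nonempty := by
  have h := (tendsto_cdf_atTop μ).eventually_const_le hu
  exact h.exists

lemma quant_set_bddBelow (hu : 0 < u) : BddBelow {x | u ≤ cdf μ x} := by
  have h := (tendsto_cdf_atBot μ).eventually_lt_const hu
  obtain ⟨x0, hx0⟩ := h.exists
  refine ⟨x0, fun x hx => ?_⟩
  by_contra hlt
  push_neg at hlt
  exact absurd (le_trans hx (monotone_cdf μ hlt.le)) (not_le.mpr hx0)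

lemma quant_le_iff (hu0 : 0 < u) (hu1 : u < 1) {x : ℝ} :
    Quant μ u ≤ x ↔ u ≤ cdf μ x := by
  constructor
  · intro h
    have key : ∀ y, x < y → u ≤ cdf μ y := by
      intro y hy
      obtain ⟨z, hz, hzy⟩ := (csInf_lt_iff (quant_set_bddBelow μ hu0)
        (quant_set_nonempty μ hu1)).mp (lt_of_le_of_lt h hy)
      exact le_trans hz (monotone_cdf μ hzy.le)
    have hrc : Tendsto (cdf μ) (𝓝[>] x) (𝓝 (cdf μ x)) :=
      ((cdf μ).right_continuous x).tendsto.mono_left (nhdsWithin_mono x Ioi_subset_Ici_self)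
    exact ge_of_tendsto hrc (eventually_nhdsWithin_of_forall (fun y hy => key y hy))
  · intro h
    exact csInf_le (quant_set_bddBelow μ hu0) h

lemma quant_monotoneOn : MonotoneOn (Quant μ) (Ioo (0:ℝ) 1) := by
  intro u hu v hv huv
  exact csInf_le_csInf (quant_set_bddBelow μ hu.1) (quant_set_nonempty μ hv.2)
    (fun x hx => le_trans huv hx)

lemma quant_aemeasurable : AEMeasurable (Quant μ) (volume.restrict (Ioo (0:ℝ) 1)) :=
  aemeasurable_restrict_of_monotoneOn measurableSet_Ioo (quant_monotoneOn μ)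

instance : IsProbabilityMeasure (volume.restrict (Ioo (0:ℝ) 1)) :=
  ⟨by simp [Real.volume_Ioo]⟩

lemma quant_map : (volume.restrict (Ioo (0:ℝ) 1)).map (Quant μ) = μ := by
  have hpm : IsProbabilityMeasure ((volume.restrict (Ioo (0:ℝ) 1)).map (Quant μ)) :=
    Measure.isProbabilityMeasure_map (quant_aemeasurable μ)
  refine Measure.eq_of_cdf _ _ ?_
  ext x
  have hmap : ((volume.restrict (Ioo (0:ℝ) 1)).map (Quant μ)) (Iic x)
      = volume ((Quant μ ⁻¹' Iic x) ∩ Ioo 0 1) := by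
    rw [Measure.map_apply_of_aemeasurable (quant_aemeasurable μ) measurableSet_Iic,
      Measure.restrict_apply₀]
    exact (quant_aemeasurable μ).nullMeasurable measurableSet_Iic
  have hset : (Quant μ ⁻¹' Iic x) ∩ Ioo 0 1 = Iic (cdf μ x) ∩ Ioo 0 1 := by
    ext u
    simp only [mem_inter_iff, mem_preimage, mem_Iic, mem_Ioo, and_congr_left_iff]
    intro hu
    exact quant_le_iff μ hu.1 hu.2
  have hc0 : (0:ℝ) ≤ cdf μ x := cdf_nonneg μ x
  have hc1 : cdf μ x ≤ 1 := cdf_le_one μ x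
  have hvol : volume (Iic (cdf μ x) ∩ Ioo (0:ℝ) 1) = ENNReal.ofReal (cdf μ x) := by
    rcases lt_or_eq_of_le hc1 with h | h
    · have : Iic (cdf μ x) ∩ Ioo (0:ℝ) 1 = Ioc 0 (cdf μ x) := by
        ext u; simp only [mem_inter_iff, mem_Iic, mem_Ioo, mem_Ioc]
        constructor
        · rintro ⟨h1, h2, h3⟩; exact ⟨h2, h1⟩
        · rintro ⟨h1, h2⟩; exact ⟨h2, h1, lt_of_le_of_lt h2 h⟩
      rw [this, Real.volume_Ioc]; simp
    · have : Iic (cdf μ x) ∩ Ioo (0:ℝ) 1 = Ioo 0 1 := by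
        rw [← h]; exact inter_eq_self_of_subset_right (fun u hu => le_of_lt hu.2)
      rw [this, Real.volume_Ioo, ← h]; simp
  have : cdf ((volume.restrict (Ioo (0:ℝ) 1)).map (Quant μ)) x = cdf μ x := by
    rw [cdf_eq_real, measureReal_def, hmap, hset, hvol, ENNReal.toReal_ofReal hc0]
  exact this

end QuantLemmas

/-! ### The isotone (quantile) coupling -/

lemma quant_le_quant (α β : Measure ℝ) [IsProbabilityMeasure α] [IsProbabilityMeasure β] (hcdf : ∀ x, cdf β x ≤ cdf α x)
    {u : ℝ} (hu0 : 0 < u) (hu1 : u < 1) : Quant α u ≤ Quant β u :=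
  csInf_le_csInf (quant_set_bddBelow α hu0) (quant_set_nonempty β hu1)
    (fun x hx => le_trans hx (hcdf x))

lemma exists_isotone_coupling (α β : Measure ℝ) [IsProbabilityMeasure α]
    [IsProbabilityMeasure β] (hcdf : ∀ x, cdf β x ≤ cdf α x) :
    ∃ γ : Measure (ℝ × ℝ), IsProbabilityMeasure γ ∧
      γ.map Prod.fst = α ∧ γ.map Prod.snd = β ∧
      γ {p : ℝ × ℝ | p.1 ≤ p.2} = 1 := by
  set μ0 := volume.restrict (Ioo (0:ℝ) 1) with hμ0
  set g : ℝ → ℝ × ℝ := fun u => (Quant α u, Quant β u) with hg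
  have hgm : AEMeasurable g μ0 := (quant_aemeasurable α).prodMk (quant_aemeasurable β)
  refine ⟨μ0.map g, Measure.isProbabilityMeasure_map hgm, ?_, ?_, ?_⟩
  · rw [AEMeasurable.map_map_of_aemeasurable measurable_fst.aemeasurable hgm]
    exact quant_map α
  · rw [AEMeasurable.map_map_of_aemeasurable measurable_snd.aemeasurable hgm]
    exact quant_map β
  · have hmeas : MeasurableSet {p : ℝ × ℝ | p.1 ≤ p.2} :=
      measurableSet_le measurable_fst measurable_snd
    rw [Measure.map_apply_of_aemeasurable hgm hmeas]
    have hsub : Ioo (0:ℝ) 1 ⊆ g ⁻¹' {p : ℝ × ℝ | p.1 ≤ p.2} := by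
      intro u hu
      exact quant_le_quant α β hcdf hu.1 hu.2
    have h1 : μ0 (g ⁻¹' {p : ℝ × ℝ | p.1 ≤ p.2}) ≥ μ0 (Ioo 0 1) := measure_mono hsub
    have h2 : μ0 (Ioo (0:ℝ) 1) = 1 := by
      rw [hμ0, Measure.restrict_apply measurableSet_Ioo, inter_self, Real.volume_Ioo]; simp
    have h3 := prob_le_one (μ := μ0) (s := g ⁻¹' {p : ℝ × ℝ | p.1 ≤ p.2})
    exact le_antisymm h3 (h2 ▸ h1)

/-! ### Basic facts about couplings and `W1` -/

section Lems
variable {α β : Measure ℝ} [IsProbabilityMeasure α] [IsProbabilityMeasure β]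

lemma integrable_id_of_abs (hα : Integrable (fun x => |x|) α) : Integrable (id : ℝ → ℝ) α := by
  rw [← integrable_norm_iff aestronglyMeasurable_id]
  simpa [Real.norm_eq_abs] using hα

lemma coupling_fst_integrable {γ : Measure (ℝ × ℝ)} (h1 : γ.map Prod.fst = α)
    (hα : Integrable (fun x => |x|) α) : Integrable (fun p : ℝ × ℝ => p.1) γ := by
  have := (integrable_map_measure (f := Prod.fst) (g := id)
    (by rw [h1]; exact aestronglyMeasurable_id) measurable_fst.aemeasurable).mp
  rw [h1] at this
  exact this (integrable_id_of_abs hα)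

lemma coupling_snd_integrable {γ : Measure (ℝ × ℝ)} (h2 : γ.map Prod.snd = β)
    (hβ : Integrable (fun x => |x|) β) : Integrable (fun p : ℝ × ℝ => p.2) γ := by
  have := (integrable_map_measure (f := Prod.snd) (g := id)
    (by rw [h2]; exact aestronglyMeasurable_id) measurable_snd.aemeasurable).mp
  rw [h2] at this
  exact this (integrable_id_of_abs hβ)

lemma coupling_fst_integral {γ : Measure (ℝ × ℝ)} (h1 : γ.map Prod.fst = α) :
    ∫ p : ℝ × ℝ, p.1 ∂γ = ∫ y, y ∂α := by
  rw [← h1, integral_map measurable_fst.aemeasurable (by rw [h1]; exact aestronglyMeasurable_id)]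

lemma coupling_snd_integral {γ : Measure (ℝ × ℝ)} (h2 : γ.map Prod.snd = β) :
    ∫ p : ℝ × ℝ, p.2 ∂γ = ∫ y, y ∂β := by
  rw [← h2, integral_map measurable_snd.aemeasurable (by rw [h2]; exact aestronglyMeasurable_id)]

lemma coupling_abs_integrable {γ : Measure (ℝ × ℝ)} (h1 : γ.map Prod.fst = α)
    (h2 : γ.map Prod.snd = β) (hα : Integrable (fun x => |x|) α)
    (hβ : Integrable (fun x => |x|) β) :
    Integrable (fun p : ℝ × ℝ => |p.1 - p.2|) γ :=
  ((coupling_fst_integrable h1 hα).sub (coupling_snd_integrable h2 hβ)).abs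

lemma coupling_lower_bound {γ : Measure (ℝ × ℝ)} (h1 : γ.map Prod.fst = α)
    (h2 : γ.map Prod.snd = β) (hα : Integrable (fun x => |x|) α)
    (hβ : Integrable (fun x => |x|) β) :
    (∫ y, y ∂β) - (∫ y, y ∂α) ≤ ∫ p : ℝ × ℝ, |p.1 - p.2| ∂γ := by
  have hi1 := coupling_fst_integrable h1 hα
  have hi2 := coupling_snd_integrable h2 hβ
  have : (∫ y, y ∂β) - (∫ y, y ∂α) = ∫ p : ℝ × ℝ, (p.2 - p.1) ∂γ := by
    rw [integral_sub hi2 hi1, coupling_fst_integral h1, coupling_snd_integral h2]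
  rw [this]
  refine integral_mono (hi2.sub hi1) (coupling_abs_integrable h1 h2 hα hβ) ?_
  intro p
  simp only [abs_sub_comm p.1 p.2]
  exact le_abs_self _

lemma W1_set_nonempty :
    {r : ℝ | ∃ γ : Measure (ℝ × ℝ), IsProbabilityMeasure γ ∧
    γ.map Prod.fst = α ∧ γ.map Prod.snd = β ∧ r = ∫ p, |p.1 - p.2| ∂γ}.Nonempty := by
  refine ⟨∫ p : ℝ × ℝ, |p.1 - p.2| ∂(α.prod β), α.prod β, inferInstance, ?_, ?_, rfl⟩
  · simp [Measure.map_fst_prod]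
  · simp [Measure.map_snd_prod]

lemma W1_ge (hα : Integrable (fun x => |x|) α) (hβ : Integrable (fun x => |x|) β) :
    (∫ y, y ∂β) - (∫ y, y ∂α) ≤ W1 α β := by
  refine le_csInf W1_set_nonempty ?_
  rintro r ⟨γ, hpm, h1, h2, rfl⟩
  exact coupling_lower_bound h1 h2 hα hβ

lemma W1_eq_of_isotone (hα : Integrable (fun x => |x|) α) (hβ : Integrable (fun x => |x|) β)
    {γ : Measure (ℝ × ℝ)} (hpm : IsProbabilityMeasure γ) (h1 : γ.map Prod.fst = α)
    (h2 : γ.map Prod.snd = β) (hiso : γ {p : ℝ × ℝ | p.1 ≤ p.2} = 1) :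
    W1 α β = (∫ y, y ∂β) - (∫ y, y ∂α) := by
  have hmeas : MeasurableSet {p : ℝ × ℝ | p.1 ≤ p.2} :=
    measurableSet_le measurable_fst measurable_snd
  have hae : ∀ᵐ p ∂γ, p.1 ≤ p.2 := by
    rw [ae_iff]
    have := measure_compl hmeas (measure_ne_top γ _)
    simp only [hiso, measure_univ] at this
    simpa [compl_setOf] using this.trans (by simp)
  have heq : ∫ p : ℝ × ℝ, |p.1 - p.2| ∂γ = ∫ p : ℝ × ℝ, (p.2 - p.1) ∂γ := by
    refine integral_congr_ae ?_
    filter_upwards [hae] with p hp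
    rw [abs_sub_comm, abs_of_nonneg (by linarith)]
  have hval : ∫ p : ℝ × ℝ, |p.1 - p.2| ∂γ = (∫ y, y ∂β) - (∫ y, y ∂α) := by
    rw [heq, integral_sub (coupling_snd_integrable h2 hβ) (coupling_fst_integrable h1 hα),
      coupling_fst_integral h1, coupling_snd_integral h2]
  refine le_antisymm ?_ (W1_ge hα hβ)
  rw [← hval]
  exact csInf_le ⟨_, fun r hr => by
    obtain ⟨γ', hpm', h1', h2', rfl⟩ := hr
    exact coupling_lower_bound h1' h2' hα hβ⟩ ⟨γ, hpm, h1, h2, hval.symm ▸ rfl⟩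

/-! ### Stochastic dominance and cdfs -/

lemma cdf_of_stochDom (h : StochDom α β) : ∀ x, cdf β x ≤ cdf α x := by
  intro t
  have hf : Monotone ((Ioi t).indicator (fun _ => (1:ℝ))) := by
    intro x y hxy
    by_cases hx : x ∈ Ioi t
    · have hy : y ∈ Ioi t := lt_of_lt_of_le hx hxy
      simp [indicator_of_mem, hx, hy]
    · simp only [indicator_of_notMem hx]
      exact indicator_nonneg (fun _ _ => zero_le_one) y
  have hb : ∃ C, ∀ x, |(Ioi t).indicator (fun _ => (1:ℝ)) x| ≤ C := by
    refine ⟨1, fun x => ?_⟩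
    by_cases hx : x ∈ Ioi t <;> simp [hx]
  have key := h _ hf hb
  rw [integral_indicator_const (1:ℝ) measurableSet_Ioi,
    integral_indicator_const (1:ℝ) measurableSet_Ioi] at key
  simp only [smul_eq_mul, mul_one] at key
  have hA : (α (Ioi t)).toReal = 1 - cdf α t := by
    rw [cdf_eq_real, measureReal_def]
    have := measure_compl (measurableSet_Iic (a := t)) (measure_ne_top α _)
    rw [compl_Iic, measure_univ] at this
    rw [this, ENNReal.toReal_sub_of_le prob_le_one ENNReal.one_ne_top]
    simp
  have hB : (β (Ioi t)).toReal = 1 - cdf β t := by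
    rw [cdf_eq_real, measureReal_def]
    have := measure_compl (measurableSet_Iic (a := t)) (measure_ne_top β _)
    rw [compl_Iic, measure_univ] at this
    rw [this, ENNReal.toReal_sub_of_le prob_le_one ENNReal.one_ne_top]
    simp
  rw [measureReal_def, measureReal_def, hA, hB] at key
  linarith

lemma stochDom_of_isotone {γ : Measure (ℝ × ℝ)} (hpm : IsProbabilityMeasure γ)
    (h1 : γ.map Prod.fst = α) (h2 : γ.map Prod.snd = β)
    (hiso : γ {p : ℝ × ℝ | p.1 ≤ p.2} = 1) : StochDom α β := by
  intro f hf ⟨C, hC⟩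
  have hae : ∀ᵐ p ∂γ, p.1 ≤ p.2 := by
    rw [ae_iff]
    have := measure_compl (measurableSet_le measurable_fst measurable_snd)
      (measure_ne_top γ _)
    simp only [hiso, measure_univ] at this
    simpa [compl_setOf] using this.trans (by simp)
  have hfm : Measurable f := hf.measurable
  have hint : ∀ (g : ℝ × ℝ → ℝ), Measurable g → (∀ p, |g p| ≤ C) → Integrable g γ := by
    intro g hg hb
    refine ⟨hg.aestronglyMeasurable, ?_⟩
    refine HasFiniteIntegral.of_bounded (C := C) (ae_of_all _ ?_)
    intro p; simpa [Real.norm_eq_abs] using hb p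
  have i1 : Integrable (fun p : ℝ × ℝ => f p.1) γ :=
    hint _ (hfm.comp measurable_fst) (fun p => hC p.1)
  have i2 : Integrable (fun p : ℝ × ℝ => f p.2) γ :=
    hint _ (hfm.comp measurable_snd) (fun p => hC p.2)
  have e1 : ∫ x, f x ∂α = ∫ p : ℝ × ℝ, f p.1 ∂γ := by
    rw [← h1, integral_map measurable_fst.aemeasurable
      (by rw [h1]; exact hfm.aestronglyMeasurable)]
  have e2 : ∫ x, f x ∂β = ∫ p : ℝ × ℝ, f p.2 ∂γ := by
    rw [← h2, integral_map measurable_snd.aemeasurable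
      (by rw [h2]; exact hfm.aestronglyMeasurable)]
  rw [e1, e2]
  refine integral_mono_ae i1 i2 ?_
  filter_upwards [hae] with p hp
  exact hf hp

/-! ### From near-optimal couplings to the cdf inequality -/

lemma tail_ineq (hα : Integrable (fun x => |x|) α) (hβ : Integrable (fun x => |x|) β)
    (hnear : ∀ ε > (0:ℝ), ∃ γ : Measure (ℝ × ℝ), IsProbabilityMeasure γ ∧
      γ.map Prod.fst = α ∧ γ.map Prod.snd = β ∧
      ∫ p, |p.1 - p.2| ∂γ < ((∫ y, y ∂β) - (∫ y, y ∂α)) + ε)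
    {s t : ℝ} (hst : s < t) : (α (Ioi t)).toReal ≤ (β (Ioi s)).toReal := by
  set δ := t - s with hδ
  have hδpos : 0 < δ := by simp [hδ]; linarith
  refine le_of_forall_pos_le_add ?_
  intro ε hε
  obtain ⟨γ, hpm, h1, h2, hγ⟩ := hnear (2 * δ * ε) (by positivity)
  set h : ℝ × ℝ → ℝ := fun p => |p.1 - p.2| + (p.1 - p.2) with hh
  have hiA := coupling_abs_integrable h1 h2 hα hβ
  have hiS : Integrable (fun p : ℝ × ℝ => p.1 - p.2) γ :=
    (coupling_fst_integrable h1 hα).sub (coupling_snd_integrable h2 hβ)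
  have hint : Integrable h γ := hiA.add hiS
  have hnn : 0 ≤ᵐ[γ] h := ae_of_all _ (fun p => by
    simp only [hh, Pi.zero_apply]
    have := abs_nonneg (p.1 - p.2)
    have := neg_abs_le (p.1 - p.2)
    linarith)
  have hsum : ∫ p, h p ∂γ < 2 * δ * ε := by
    have : ∫ p, h p ∂γ = (∫ p, |p.1 - p.2| ∂γ) + ((∫ y, y ∂α) - (∫ y, y ∂β)) := by
      rw [hh]
      rw [integral_add hiA hiS,
        integral_sub (coupling_fst_integrable h1 hα) (coupling_snd_integrable h2 hβ),
        coupling_fst_integral h1, coupling_snd_integral h2]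
    rw [this]; linarith
  have hmarkov := mul_meas_ge_le_integral_of_nonneg hnn hint (2 * δ)
  have hbad : (γ {p : ℝ × ℝ | 2 * δ ≤ h p}).toReal ≤ ε := by
    rw [measureReal_def] at hmarkov
    nlinarith [hmarkov, hsum, ENNReal.toReal_nonneg (a := γ {p : ℝ × ℝ | 2 * δ ≤ h p})]
  have hincl : (Prod.fst ⁻¹' Ioi t : Set (ℝ × ℝ)) ⊆
      (Prod.snd ⁻¹' Ioi s) ∪ {p : ℝ × ℝ | 2 * δ ≤ h p} := by
    intro p hp
    by_cases hp2 : s < p.2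
    · exact Or.inl hp2
    · push_neg at hp2
      refine Or.inr ?_
      have hd : δ ≤ p.1 - p.2 := by
        simp only [mem_preimage, mem_Ioi] at hp
        simp only [hδ]; linarith
      have : 0 ≤ p.1 - p.2 := le_trans hδpos.le hd
      simp only [mem_setOf_eq, hh, abs_of_nonneg this]
      linarith
  have hα' : α (Ioi t) = γ (Prod.fst ⁻¹' Ioi t) := by
    rw [← h1, Measure.map_apply measurable_fst measurableSet_Ioi]
  have hβ' : β (Ioi s) = γ (Prod.snd ⁻¹' Ioi s) := by
    rw [← h2, Measure.map_apply measurable_snd measurableSet_Ioi]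
  have hmle : γ (Prod.fst ⁻¹' Ioi t) ≤ γ (Prod.snd ⁻¹' Ioi s) + γ {p : ℝ × ℝ | 2 * δ ≤ h p} :=
    le_trans (measure_mono hincl) (measure_union_le _ _)
  have hfin1 : γ (Prod.snd ⁻¹' Ioi s) ≠ ⊤ := measure_ne_top _ _
  have hfin2 : γ {p : ℝ × ℝ | 2 * δ ≤ h p} ≠ ⊤ := measure_ne_top _ _
  have := ENNReal.toReal_mono (by simp [hfin1, hfin2, ENNReal.add_ne_top]) hmle
  rw [ENNReal.toReal_add hfin1 hfin2] at this
  rw [hα', hβ']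
  linarith [hbad]

lemma cdf_le_of_tail (htail : ∀ s t : ℝ, s < t → (α (Ioi t)).toReal ≤ (β (Ioi s)).toReal) :
    ∀ x, cdf β x ≤ cdf α x := by
  have hA : ∀ t, (α (Ioi t)).toReal = 1 - cdf α t := by
    intro t
    rw [cdf_eq_real, measureReal_def]
    have := measure_compl (measurableSet_Iic (a := t)) (measure_ne_top α _)
    rw [compl_Iic, measure_univ] at this
    rw [this, ENNReal.toReal_sub_of_le prob_le_one ENNReal.one_ne_top]
    simp
  have hB : ∀ t, (β (Ioi t)).toReal = 1 - cdf β t := by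
    intro t
    rw [cdf_eq_real, measureReal_def]
    have := measure_compl (measurableSet_Iic (a := t)) (measure_ne_top β _)
    rw [compl_Iic, measure_univ] at this
    rw [this, ENNReal.toReal_sub_of_le prob_le_one ENNReal.one_ne_top]
    simp
  have key : ∀ s t : ℝ, s < t → cdf β s ≤ cdf α t := by
    intro s t hst
    have := htail s t hst
    rw [hA, hB] at this
    linarith
  intro x
  have hrc : Tendsto (cdf α) (𝓝[>] x) (𝓝 (cdf α x)) :=
    ((cdf α).right_continuous x).tendsto.mono_left (nhdsWithin_mono x Ioi_subset_Ici_self)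
  exact ge_of_tendsto hrc (eventually_nhdsWithin_of_forall (fun y hy => key x y hy))

end Lems

/-- for probability measures `α, β` on `ℝ` with finite first moments and
barycenters `a ≤ b`, one has `W(α,β) = b − a` iff `α ≤_st β` in first-order stochastic
dominance, equivalently iff there is an isotone coupling `γ ∈ Π(α,β)`, i.e.
`γ({(y,y') : y ≤ y'}) = 1`. -/
theorem wasserstein_eq_barycenter_gap_iff
    (α β : Measure ℝ) [IsProbabilityMeasure α] [IsProbabilityMeasure β]
    (hα : Integrable (fun x => |x|) α) (hβ : Integrable (fun x => |x|) β)
    (a b : ℝ) (ha : a = ∫ y, y ∂α) (hb : b = ∫ y, y ∂β) (hab : a ≤ b) :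
    (W1 α β = b - a ↔ StochDom α β) ∧
    (W1 α β = b - a ↔ ∃ γ : Measure (ℝ × ℝ), IsProbabilityMeasure γ ∧
      γ.map Prod.fst = α ∧ γ.map Prod.snd = β ∧
      γ {p : ℝ × ℝ | p.1 ≤ p.2} = 1) := by
  subst ha hb
  -- main implications
  have main1 : W1 α β = (∫ y, y ∂β) - (∫ y, y ∂α) → ∀ x, cdf β x ≤ cdf α x := by
    intro hW
    refine cdf_le_of_tail (fun s t hst => tail_ineq hα hβ ?_ hst)
    intro ε hε
    have hlt : sInf {r : ℝ | ∃ γ : Measure (ℝ × ℝ), IsProbabilityMeasure γ ∧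
        γ.map Prod.fst = α ∧ γ.map Prod.snd = β ∧ r = ∫ p, |p.1 - p.2| ∂γ}
        < ((∫ y, y ∂β) - (∫ y, y ∂α)) + ε := by
      have : W1 α β < ((∫ y, y ∂β) - (∫ y, y ∂α)) + ε := by rw [hW]; linarith
      exact this
    obtain ⟨r, ⟨γ, hpm, h1, h2, rfl⟩, hrlt⟩ := exists_lt_of_csInf_lt W1_set_nonempty hlt
    exact ⟨γ, hpm, h1, h2, hrlt⟩
  have main2 := exists_isotone_coupling α β
  constructor
  · constructor
    · intro hW
      obtain ⟨γ, hpm, h1, h2, hiso⟩ := main2 (main1 hW)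
      exact stochDom_of_isotone hpm h1 h2 hiso
    · intro hSD
      obtain ⟨γ, hpm, h1, h2, hiso⟩ := main2 (cdf_of_stochDom hSD)
      exact W1_eq_of_isotone hα hβ hpm h1 h2 hiso
  · constructor
    · intro hW
      exact main2 (main1 hW)
    · rintro ⟨γ, hpm, h1, h2, hiso⟩
      exact W1_eq_of_isotone hα hβ hpm h1 h2 hiso
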